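/- For every N ≥ 2 and k ≥ 1, the quantity σ_N(k) := T_N(k−1) + (2k−1) + T'_N(k) + (s_N(k−1) − 1) satisfies the closed form σ_N(k) = (2N/(N²−1))·(N^{2k} − 1) + 4k − 2. -/

import Mathlib

def sN (N : ℕ) : ℕ → ℕ
  | 0 => N
  | n+1 => N^2 * sN N n - N^2 + N

def tN (N : ℕ) : ℕ → ℕ
  | 0 => 0
  | n+1 => (N + 1) * (sN N n - 1) + 1

def TN (N n : ℕ) : ℕ := ∑ i ∈ Finset.range (n + 1), tN N i

def sN' (N : ℕ) : ℕ → ℕ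
  | 0 => 1
  | n+1 => N^2 * sN' N n - N + 1

def tN' (N : ℕ) : ℕ → ℕ
  | 0 => 0
  | n+1 => (N + 1) * sN' N n + 1

def TN' (N n : ℕ) : ℕ := ∑ i ∈ Finset.range (n + 1), tN' N i

def sigmaN (N k : ℕ) : ℕ := TN N (k - 1) + (2 * k - 1) + TN' N k + (sN N (k - 1) - 1)

lemma sN_pos (N : ℕ) (hN : 1 ≤ N) : ∀ n, 1 ≤ sN N n
  | 0 => hN
  | n+1 => by
    have h := sN_pos N hN n
    have : N^2 ≤ N^2 * sN N n := Nat.le_mul_of_pos_right _ h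
    simp only [sN]; omega

lemma sN'_pos (N : ℕ) (hN : 1 ≤ N) : ∀ n, 1 ≤ sN' N n
  | 0 => le_refl 1
  | n+1 => by
    have h := sN'_pos N hN n
    have h2 : N^2 ≤ N^2 * sN' N n := Nat.le_mul_of_pos_right _ h
    have h3 : N ≤ N^2 := by nlinarith
    simp only [sN']; omega

lemma hs (N : ℕ) (hN : 1 ≤ N) : ∀ n, (N+1) * sN N n = N^(2*n+2) + N
  | 0 => by simp [sN]; ring
  | n+1 => by
    have ih := hs N hN n
    have h := sN_pos N hN n
    have hge : N^2 ≤ N^2 * sN N n := Nat.le_mul_of_pos_right _ h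
    simp only [sN]
    zify [hge] at ih ⊢
    linear_combination (N:ℤ)^2 * ih

lemma hs' (N : ℕ) (hN : 1 ≤ N) : ∀ n, (N+1) * sN' N n = N^(2*n+1) + 1
  | 0 => by simp [sN']
  | n+1 => by
    have ih := hs' N hN n
    have h := sN'_pos N hN n
    have h2 : N^2 ≤ N^2 * sN' N n := Nat.le_mul_of_pos_right _ h
    have h3 : N ≤ N^2 := by nlinarith
    simp only [sN']
    zify [le_trans h3 h2] at ih ⊢
    linear_combination (N:ℤ)^2 * ih

lemma ht (N : ℕ) (hN : 1 ≤ N) (n : ℕ) : tN N (n+1) = N^(2*n+2) := by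
  have h := sN_pos N hN n
  have h2 := hs N hN n
  simp only [tN]
  zify [h] at *
  linear_combination h2

lemma ht' (N : ℕ) (hN : 1 ≤ N) (n : ℕ) : tN' N (n+1) = N^(2*n+1) + 2 := by
  have h2 := hs' N hN n
  simp only [tN']
  zify at *
  linear_combination h2

lemma hT (N : ℕ) (hN : 1 ≤ N) : ∀ n, (N^2-1) * TN N n = N^(2*n+2) - N^2
  | 0 => by simp [TN, tN]
  | n+1 => by
    have ih := hT N hN n
    have hp : N^2 ≤ N^(2*n+2) := Nat.pow_le_pow_right hN (by omega)
    have hp2 : N^(2*n+2) ≤ N^(2*(n+1)+2) := Nat.pow_le_pow_right hN (by omega)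
    have hsum : TN N (n+1) = TN N n + tN N (n+1) := by
      simp [TN, Finset.sum_range_succ]
    have hN2 : 1 ≤ N^2 := Nat.one_le_pow _ _ hN
    rw [hsum, Nat.mul_add, ih, ht N hN]
    zify [hp, le_trans hp hp2, hN2]
    have h1 : (N:ℤ)^(2*(n+1)+2) = N^2 * N^(2*n+2) := by ring
    linear_combination h1

lemma hT' (N : ℕ) (hN : 1 ≤ N) : ∀ n, (N^2-1) * TN' N n = N^(2*n+1) - N + 2*n*(N^2-1)
  | 0 => by simp [TN', tN']
  | n+1 => by
    have ih := hT' N hN n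
    have hp : N ≤ N^(2*n+1) := by
      calc N = N^1 := (pow_one N).symm
      _ ≤ N^(2*n+1) := Nat.pow_le_pow_right hN (by omega)
    have hp2 : N^(2*n+1) ≤ N^(2*(n+1)+1) := Nat.pow_le_pow_right hN (by omega)
    have hsum : TN' N (n+1) = TN' N n + tN' N (n+1) := by
      simp [TN', Finset.sum_range_succ]
    have hN2 : 1 ≤ N^2 := Nat.one_le_pow _ _ hN
    rw [hsum, Nat.mul_add, ih, ht' N hN]
    zify [hp, le_trans hp hp2, hN2]
    have h1 : (N:ℤ)^(2*(n+1)+1) = N^2 * N^(2*n+1) := by ring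
    linear_combination h1

theorem stmt_7 (N : ℕ) (hN : 2 ≤ N) (k : ℕ) (hk : 1 ≤ k) :
    (N ^ 2 - 1) * sigmaN N k = 2 * N * (N ^ (2 * k) - 1) + (4 * k - 2) * (N ^ 2 - 1) := by
  obtain ⟨m, rfl⟩ : ∃ m, k = m + 1 := ⟨k - 1, by omega⟩
  have hN1 : 1 ≤ N := by omega
  have hTm := hT N hN1 m
  have hT'm := hT' N hN1 (m+1)
  have hsm := hs N hN1 m
  have hsp := sN_pos N hN1 m
  have hN2 : 1 ≤ N^2 := Nat.one_le_pow _ _ hN1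
  have hp1 : N^2 ≤ N^(2*m+2) := Nat.pow_le_pow_right hN1 (by omega)
  have hp2 : N ≤ N^(2*(m+1)+1) := by
    calc N = N^1 := (pow_one N).symm
    _ ≤ _ := Nat.pow_le_pow_right hN1 (by omega)
  have hkk : (m+1) - 1 = m := by omega
  have hks : 1 ≤ N^(2*(m+1)) := Nat.one_le_pow _ _ hN1
  simp only [sigmaN, hkk]
  -- (N^2-1)*(sN N m - 1)
  have hss : (N^2-1) * (sN N m - 1) = (N-1) * ((N+1) * (sN N m - 1)) := by
    have : (N-1)*(N+1) = N^2 - 1 := by zify [hN1, hN2]; ring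
    rw [← this, Nat.mul_assoc]
  have hss2 : (N+1) * (sN N m - 1) = N^(2*m+2) - 1 := by
    zify [hsp, (by omega : 1 ≤ N^(2*m+2))]
    zify at hsm; push_cast [Nat.cast_sub (by omega : 1 ≤ N^(2*m+2))]; linear_combination hsm
  rw [Nat.mul_add, Nat.mul_add, Nat.mul_add, hTm, hT'm, hss, hss2]
  zify [hp1, hp2, hN2, hks, (by omega : 1 ≤ 2*(m+1)), (by omega : 2 ≤ 4*(m+1)), (by omega : 1 ≤ N^(2*m+2)), hN1]
  have h1 : (N:ℤ)^(2*(m+1)) = N^(2*m+2) := by ring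
  have h2 : (N:ℤ)^(2*(m+1)+1) = N * N^(2*m+2) := by ring
  push_cast [Nat.cast_sub (by omega : 1 ≤ N^(2*m+2))]
  linear_combination h2 - 2*(N:ℤ)*h1
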